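/- Let u : Ω → ℝ³ be C² and A : Ω → so(3) be C¹ on a connected open set Ω ⊆ ℝ³. If Du = A everywhere on Ω, then Curl A = 0 on Ω, A is constant, and D(axl A) = 0. (Redundancy of the linear Cosserat model: vanishing of the strain e = Du − A forces the curvature 𝔎 = D axl A to vanish.) -/

import Mathlib

open Matrix BigOperators

noncomputable section

abbrev V3 := Fin 3 → ℝ
abbrev M3 := Matrix (Fin 3) (Fin 3) ℝ

/-- axial vector of a 3×3 matrix (intended for skew-symmetric matrices) -/
def axl (A : M3) : V3 := ![A 2 1, A 0 2, A 1 0]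

/-- the skew-symmetric matrix with given axial vector -/
def antiM (v : V3) : M3 := !![0, -v 2, v 1; v 2, 0, -v 0; -v 1, v 0, 0]

def symM (X : M3) : M3 := (1/2 : ℝ) • (X + Xᵀ)
def skwM (X : M3) : M3 := (1/2 : ℝ) • (X - Xᵀ)
def devM (X : M3) : M3 := X - ((Matrix.trace X)/3) • (1 : M3)

/-- squared Frobenius norm -/
def frob2 (X : M3) : ℝ := ∑ i, ∑ j, (X i j)^2
/-- Frobenius inner product ⟨X,Y⟩ = tr(XYᵀ) -/
def finner (X Y : M3) : ℝ := ∑ i, ∑ j, X i j * Y i j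
/-- squared Euclidean norm of a vector -/
def norm2v (v : V3) : ℝ := ∑ i, (v i)^2

/-- partial derivative ∂ᵢ f -/
def pd (i : Fin 3) (f : V3 → ℝ) (x : V3) : ℝ := fderiv ℝ f x (Pi.single i 1)

/-- Jacobian matrix (D u)_{ij} = ∂_j u_i -/
def jac (u : V3 → V3) (x : V3) : M3 := Matrix.of fun i j => pd j (fun y => u y i) x

/-- curl of a vector field -/
def curlV (u : V3 → V3) (x : V3) : V3 :=
  ![pd 1 (fun y => u y 2) x - pd 2 (fun y => u y 1) x,
    pd 2 (fun y => u y 0) x - pd 0 (fun y => u y 2) x,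
    pd 0 (fun y => u y 1) x - pd 1 (fun y => u y 0) x]

/-- row-wise matrix Curl : (Curl P)_{ij} = ε_{jmn} ∂_m P_{in} -/
def curlM (P : V3 → M3) (x : V3) : M3 := Matrix.of fun i => curlV (fun y => P y i) x

/-- Levi-Civita symbol on Fin 3 -/
def lc (i j k : Fin 3) : ℝ :=
  ((j.val : ℝ) - (i.val : ℝ)) * ((k.val : ℝ) - (j.val : ℝ)) * ((k.val : ℝ) - (i.val : ℝ)) / 2


/-- On the open set where `jac u = A` with `A` skew, every first partial of every
entry of `A` vanishes. -/
lemma pd_entry_zero (Ω : Set V3) (hopen : IsOpen Ω)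
    (u : V3 → V3) (A : V3 → M3)
    (hu : ContDiffOn ℝ 2 u Ω)
    (hskew : ∀ x ∈ Ω, (A x)ᵀ = -(A x))
    (heq : ∀ x ∈ Ω, jac u x = A x) :
    ∀ x ∈ Ω, ∀ i j m : Fin 3, pd m (fun y => A y i j) x = 0 := by
  intro x hx
  have hmem : Ω ∈ nhds x := hopen.mem_nhds hx
  -- second partials of components of u
  set sp : Fin 3 → Fin 3 → Fin 3 → ℝ :=
    fun i j m => pd m (fun y => A y i j) x with hsp
  have hcomp : ∀ i : Fin 3, ContDiffAt ℝ 2 (fun y => u y i) x := by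
    intro i
    exact (contDiffAt_pi.1 (hu.contDiffAt hmem)) i
  have hAeq : ∀ i j : Fin 3,
      (fun y => A y i j) =ᶠ[nhds x] fun y => pd j (fun z => u z i) y := by
    intro i j
    filter_upwards [hmem] with y hy
    rw [← heq y hy]; rfl
  have key : ∀ i j m : Fin 3,
      sp i j m = fderiv ℝ (fderiv ℝ (fun y => u y i)) x (Pi.single m 1) (Pi.single j 1) := by
    intro i j m
    have h1 : sp i j m = pd m (fun y => pd j (fun z => u z i) y) x := by
      simp only [hsp, pd]
      rw [(hAeq i j).fderiv_eq]
      rfl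
    rw [h1]
    have hd : DifferentiableAt ℝ (fderiv ℝ (fun y => u y i)) x :=
      ((hcomp i).fderiv_right (m := 1) le_rfl).differentiableAt one_ne_zero
    show fderiv ℝ (fun y => (fderiv ℝ (fun z => u z i) y) (Pi.single j 1)) x (Pi.single m 1) = _
    rw [fderiv_clm_apply hd (differentiableAt_const _)]
    simp
  have hswap : ∀ i j m : Fin 3, sp i j m = sp i m j := by
    intro i j m
    rw [key i j m, key i m j]
    exact (hcomp i).isSymmSndFDerivAt (by simp) _ _
  have hskw : ∀ i j m : Fin 3, sp i j m = - sp j i m := by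
    intro i j m
    have hE : (fun y => A y i j) =ᶠ[nhds x] fun y => -(A y j i) := by
      filter_upwards [hmem] with y hy
      have := congrFun (congrFun (hskew y hy) j) i
      simpa [Matrix.transpose_apply] using this
    simp only [hsp, pd]
    rw [hE.fderiv_eq, fderiv_fun_neg]
    simp
  intro i j m
  have e1 : sp i j m = sp i m j := hswap i j m
  have e2 : sp i m j = - sp m i j := hskw i m j
  have e3 : sp m i j = sp m j i := hswap m i j
  have e4 : sp m j i = - sp j m i := hskw m j i
  have e5 : sp j m i = sp j i m := hswap j m i
  have e6 : sp j i m = - sp i j m := hskw j i m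
  show sp i j m = 0
  linarith

theorem cosserat_redundancy (Ω : Set V3) (hopen : IsOpen Ω) (hconn : IsConnected Ω)
    (u : V3 → V3) (A : V3 → M3)
    (hu : ContDiffOn ℝ 2 u Ω)
    (hA : ∀ i j, ContDiffOn ℝ 1 (fun x => A x i j) Ω)
    (hskew : ∀ x ∈ Ω, (A x)ᵀ = -(A x))
    (heq : ∀ x ∈ Ω, jac u x = A x) :
    (∀ x ∈ Ω, curlM A x = 0) ∧
    (∀ x ∈ Ω, ∀ y ∈ Ω, A x = A y) ∧
    (∀ x ∈ Ω, jac (fun y => axl (A y)) x = 0) := by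
  have hz := pd_entry_zero Ω hopen u A hu hskew heq
  refine ⟨?_, ?_, ?_⟩
  · -- Curl A = 0
    intro x hx
    ext i j
    fin_cases j <;>
      simp [curlM, curlV, hz x hx, Matrix.zero_apply]
  · -- A constant on connected Ω
    -- each entry is locally constant on Ω
    have hloc : ∀ i j : Fin 3, ∀ x ∈ Ω, ∃ ε > 0, Metric.ball x ε ⊆ Ω ∧
        ∀ y ∈ Metric.ball x ε, A y i j = A x i j := by
      intro i j x hx
      obtain ⟨ε, hε, hball⟩ := Metric.isOpen_iff.1 hopen x hx
      refine ⟨ε, hε, hball, ?_⟩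
      intro y hy
      have hdiff : DifferentiableOn ℝ (fun z => A z i j) (Metric.ball x ε) :=
        ((hA i j).mono hball).differentiableOn one_ne_zero
      have hfz : ∀ z ∈ Metric.ball x ε,
          fderivWithin ℝ (fun w => A w i j) (Metric.ball x ε) z = 0 := by
        intro z hzb
        rw [fderivWithin_of_isOpen Metric.isOpen_ball hzb]
        have hpd : ∀ m : Fin 3, fderiv ℝ (fun w => A w i j) z (Pi.single m 1) = 0 :=
          fun m => hz z (hball hzb) i j m
        ext v
        have hv : v = ∑ m : Fin 3, v m • (Pi.single m 1 : Fin 3 → ℝ) := by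
          funext k
          simp [Pi.single_apply, Finset.sum_apply, mul_comm]
        conv_lhs => rw [hv]
        simp [map_sum, _root_.map_smul, hpd]
      exact (convex_ball x ε).is_const_of_fderivWithin_eq_zero hdiff hfz hy
        (Metric.mem_ball_self hε)
    -- locally constant on the subtype, hence constant by connectedness
    intro x hx y hy
    haveI : PreconnectedSpace Ω := Subtype.preconnectedSpace hconn.isPreconnected
    have hlc : IsLocallyConstant (fun p : Ω => A p.1) := by
      rw [IsLocallyConstant.iff_exists_open]
      rintro ⟨z, hzΩ⟩
      obtain ⟨ε, hε, hball, _⟩ := hloc 0 0 z hzΩ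
      refine ⟨{p : Ω | p.1 ∈ Metric.ball z ε}, isOpen_induced Metric.isOpen_ball,
        show z ∈ Metric.ball z ε from Metric.mem_ball_self hε, ?_⟩
      rintro ⟨w, hwΩ⟩ hw
      ext i j
      obtain ⟨ε', hε', hball', hconst'⟩ := hloc i j z hzΩ
      -- redo with entry (i,j): use the same ball if possible; instead use min
      -- simpler: use fderiv-zero constancy on ball z ε directly
      have hdiff : DifferentiableOn ℝ (fun q => A q i j) (Metric.ball z ε) :=
        ((hA i j).mono hball).differentiableOn one_ne_zero
      have hfz : ∀ q ∈ Metric.ball z ε,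
          fderivWithin ℝ (fun w => A w i j) (Metric.ball z ε) q = 0 := by
        intro q hqb
        rw [fderivWithin_of_isOpen Metric.isOpen_ball hqb]
        have hpd : ∀ m : Fin 3, fderiv ℝ (fun w => A w i j) q (Pi.single m 1) = 0 :=
          fun m => hz q (hball hqb) i j m
        ext v
        have hv : v = ∑ m : Fin 3, v m • (Pi.single m 1 : Fin 3 → ℝ) := by
          funext k
          simp [Pi.single_apply, Finset.sum_apply, mul_comm]
        conv_lhs => rw [hv]
        simp [map_sum, _root_.map_smul, hpd]
      exact (convex_ball z ε).is_const_of_fderivWithin_eq_zero hdiff hfz hw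
        (Metric.mem_ball_self hε)
    exact hlc.apply_eq_of_isPreconnected isPreconnected_univ (x := ⟨x, hx⟩)
      (y := ⟨y, hy⟩) trivial trivial
  · -- D axl A = 0
    intro x hx
    ext i j
    fin_cases i <;>
      simp [jac, axl, pd, hz x hx, Matrix.zero_apply] <;>
      · have := hz x hx
        simp only [pd] at this
        simp [this]
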